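/- Let n ≥ 3 be an integer and b > 1 a real number, and set c := (bⁿ − 1)/(n·(b^{n−1} + 1)). Then there do not exist real numbers a₂, a₃ such that the function f(r) := −r²/(2n) + a₂·r^{2−n} + a₃ satisfies all four of the following: f'(1) = c; f'(b) = −c; f(1) + b^{n−1}·f(b) = 0; and (c·(n−1)/b − 1)·f(b) = (−c·(n−1) − 1)·f(1). -/

import Mathlib

open Real

/-- Auxiliary: `n * b^(n-1) ≤ (n-1) * b^n + 1` for `b ≥ 1`. -/
lemma aux_M (b : ℝ) (hb : 1 ≤ b) : ∀ n : ℕ,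
    (n : ℝ) * b ^ (n - 1) ≤ ((n : ℝ) - 1) * b ^ n + 1 := by
  intro n
  induction n with
  | zero => norm_num
  | succ m ih =>
    rcases Nat.eq_zero_or_pos m with h | h
    · subst h; norm_num
    · have hB : (1 : ℝ) ≤ b ^ (m - 1) := one_le_pow₀ hb
      have hkey : b ^ m = b * b ^ (m - 1) := by
        conv_lhs => rw [show m = (m - 1) + 1 by omega]
        ring
      have hgoal : ((m:ℝ) + 1) * b ^ m ≤ (m : ℝ) * b ^ (m + 1) + 1 := by
        have hsucc : b ^ (m + 1) = b * b ^ m := by ring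
        rw [hsucc, hkey]
        rw [hkey] at ih
        nlinarith [mul_le_mul_of_nonneg_left ih (by linarith : (0:ℝ) ≤ b),
          mul_nonneg (sub_nonneg.2 hb) (sub_nonneg.2 (one_le_pow₀ hb (n := m))),
          mul_nonneg (sub_nonneg.2 hb)
            (by nlinarith : (0:ℝ) ≤ b * b ^ (m - 1) - 1)]
      simpa [Nat.cast_succ] using hgoal

/-- Auxiliary: the strict inequality `2(b^(n-1) - b) < (n-2)(b-1)(b^(n-1)+1)`. -/
lemma aux_L (b : ℝ) (hb : 1 < b) (n : ℕ) (hn : 3 ≤ n) :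
    2 * (b ^ (n - 1) - b) < ((n : ℝ) - 2) * (b - 1) * (b ^ (n - 1) + 1) := by
  induction n, hn using Nat.le_induction with
  | base =>
    have h1 : (0:ℝ) < b - 1 := by linarith
    norm_num
    nlinarith [mul_pos (mul_pos h1 h1) h1]
  | succ m hm ih =>
    have hm1 : 1 ≤ m := by omega
    have hM := aux_M b hb.le m
    have hB1 : (1 : ℝ) ≤ b ^ (m - 1) := one_le_pow₀ hb.le
    have hkey : b ^ m = b * b ^ (m - 1) := by
      conv_lhs => rw [show m = (m - 1) + 1 by omega]
      ring
    have hb1 : (0:ℝ) < b - 1 := by linarith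
    have hN3 : (3:ℝ) ≤ (m:ℝ) := by exact_mod_cast hm
    have hgoal : 2 * (b ^ m - b) < ((m:ℝ) + 1 - 2) * (b - 1) * (b ^ m + 1) := by
      rw [hkey]
      rw [hkey] at hM
      nlinarith [mul_le_mul_of_nonneg_left hM hb1.le, ih,
        mul_pos hb1 (by nlinarith : (0:ℝ) < b ^ (m - 1))]
    simpa [Nat.cast_succ] using hgoal

/-- Pure algebra core: the four conditions are incompatible. -/
lemma aux_alg (N S b c a₂ a₃ f1 fb : ℝ)
    (hN3 : 3 ≤ N) (hb : 1 < b) (hS1 : 1 < S) (hSb : b < S)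
    (hc' : c * (N * (S + 1)) = b * S - 1)
    (hE1 : a₂ * (2 - N) * N = c * N + 1)
    (hf1 : 2 * N * f1 = -1 + 2 * N * a₂ + 2 * N * a₃)
    (hfb : 2 * N * S * fb = -b ^ 2 * S + 2 * N * a₂ * b + 2 * N * S * a₃)
    (h3 : f1 + S * fb = 0)
    (h4 : (c * (N - 1) - b) * fb = b * (-(c * (N - 1)) - 1) * f1)
    (hL : 2 * (S - b) < (N - 2) * (b - 1) * (S + 1)) : False := by
  have hb0 : (0:ℝ) < b := by linarith
  have hS0 : (0:ℝ) < S := by linarith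
  have hN0 : (0:ℝ) < N := by linarith
  have hcpos : 0 < c := by
    nlinarith [mul_pos hN0 (by linarith : (0:ℝ) < S + 1),
      mul_pos hb0 hS0]
  have hbr : c * (N - 1) - b - b * S * (c * (N - 1) + 1) < 0 := by
    nlinarith [mul_pos (mul_pos hcpos (by linarith : (0:ℝ) < N - 1))
      (by nlinarith : (0:ℝ) < b * S - 1)]
  have key0 : fb * (c * (N - 1) - b - b * S * (c * (N - 1) + 1)) = 0 := by
    linear_combination h4 - b * (c * (N - 1) + 1) * h3
  have hfb0 : fb = 0 := by
    rcases mul_eq_zero.1 key0 with h | h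
    · exact h
    · exact absurd h (ne_of_lt hbr)
  have hf10 : f1 = 0 := by rw [hfb0] at h3; linarith
  rw [hf10] at hf1
  rw [hfb0] at hfb
  -- hI : a₂ (2-N) N (S+1) = S(b+1)
  have hI : a₂ * (2 - N) * N * (S + 1) = S * (b + 1) := by
    linear_combination (S + 1) * hE1 + hc'
  -- hII : 2 N a₂ (S - b) = S (1 - b²)
  have hII : 2 * N * a₂ * (S - b) = S * (1 - b ^ 2) := by
    linear_combination hfb - S * hf1
  have hkey : (2 * (S - b)) * (S * (b + 1)) =
      ((N - 2) * (b - 1) * (S + 1)) * (S * (b + 1)) := by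
    linear_combination (2 - N) * (S + 1) * hII - 2 * (S - b) * hI
  have hne : S * (b + 1) ≠ 0 := by positivity
  have hkey' : 2 * (S - b) = (N - 2) * (b - 1) * (S + 1) := mul_right_cancel₀ hne hkey
  linarith

theorem stmt_15 (n : ℕ) (hn : 3 ≤ n) (b : ℝ) (hb : 1 < b) (c : ℝ)
    (hc : c = (b ^ n - 1) / (n * (b ^ (n - 1) + 1))) :
    ¬∃ a₂ a₃ : ℝ, ∃ f : ℝ → ℝ,
      (∀ r : ℝ, f r = -r ^ 2 / (2 * n) + a₂ * r ^ ((2 : ℤ) - n) + a₃) ∧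
      deriv f 1 = c ∧
      deriv f b = -c ∧
      f 1 + b ^ (n - 1) * f b = 0 ∧
      (c * (n - 1) / b - 1) * f b = (-(c * (n - 1)) - 1) * f 1 := by
  rintro ⟨a₂, a₃, f, hf, hd1, -, h3, h4⟩
  have hb0 : (0:ℝ) < b := by linarith
  have hbne : b ≠ 0 := ne_of_gt hb0
  have hN3 : (3:ℝ) ≤ (n:ℝ) := by exact_mod_cast hn
  have hN0 : (n:ℝ) ≠ 0 := by positivity
  have hS1 : 1 < b ^ (n - 1) := one_lt_pow₀ hb (by omega)
  have hSb : b < b ^ (n - 1) := by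
    calc b = b ^ 1 := (pow_one b).symm
    _ < b ^ (n - 1) := pow_lt_pow_right₀ hb (by omega)
  have hS0 : (0:ℝ) < b ^ (n - 1) := by positivity
  have hbn : b ^ n = b * b ^ (n - 1) := by
    conv_lhs => rw [show n = (n - 1) + 1 by omega]
    ring
  -- cleared form of hc
  have hc' : c * ((n:ℝ) * (b ^ (n - 1) + 1)) = b * b ^ (n - 1) - 1 := by
    rw [hc, hbn]
    field_simp
  -- zpow simplifications
  have hz2 : b ^ ((2:ℤ) - (n:ℤ)) = b ^ 2 / b ^ n := by
    rw [zpow_sub₀ hbne]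
    norm_cast
  -- cleared forms of f 1 and f b
  have hf1 : 2 * (n:ℝ) * f 1 = -1 + 2 * (n:ℝ) * a₂ + 2 * (n:ℝ) * a₃ := by
    rw [hf 1, one_zpow]
    field_simp
  have hfb : 2 * (n:ℝ) * b ^ (n - 1) * f b =
      -b ^ 2 * b ^ (n - 1) + 2 * (n:ℝ) * a₂ * b + 2 * (n:ℝ) * b ^ (n - 1) * a₃ := by
    rw [hf b, hz2, hbn]
    field_simp
  -- derivative at 1
  have hder : HasDerivAt f
      (-(2 * (1:ℝ) ^ 1) / (2 * (n:ℝ)) +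
        a₂ * ((((2:ℤ) - (n:ℤ) : ℤ) : ℝ) * (1:ℝ) ^ ((2:ℤ) - (n:ℤ) - 1))) 1 := by
    rw [funext hf]
    have h1 : HasDerivAt (fun r : ℝ => -r ^ 2 / (2 * (n:ℝ)))
        (-(2 * (1:ℝ) ^ 1) / (2 * (n:ℝ))) 1 := by
      simpa using ((hasDerivAt_pow 2 (1:ℝ)).neg.div_const (2 * (n:ℝ)))
    have h2 : HasDerivAt (fun r : ℝ => a₂ * r ^ ((2:ℤ) - (n:ℤ)))
        (a₂ * ((((2:ℤ) - (n:ℤ) : ℤ) : ℝ) * (1:ℝ) ^ ((2:ℤ) - (n:ℤ) - 1))) 1 :=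
      (hasDerivAt_zpow ((2:ℤ) - (n:ℤ)) 1 (Or.inl one_ne_zero)).const_mul a₂
    exact (h1.add h2).add_const a₃
  have hd1' : -(2 * (1:ℝ) ^ 1) / (2 * (n:ℝ)) +
      a₂ * ((((2:ℤ) - (n:ℤ) : ℤ) : ℝ) * (1:ℝ) ^ ((2:ℤ) - (n:ℤ) - 1)) = c := by
    rw [← hder.deriv]; exact hd1
  rw [one_zpow] at hd1'
  push_cast at hd1'
  have hE1 : a₂ * (2 - (n:ℝ)) * (n:ℝ) = c * (n:ℝ) + 1 := by
    field_simp at hd1'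
    linear_combination hd1'
  -- cleared form of h4
  have h4' : (c * ((n:ℝ) - 1) - b) * f b = b * (-(c * ((n:ℝ) - 1)) - 1) * f 1 := by
    field_simp at h4
    linear_combination h4
  exact aux_alg (n:ℝ) (b ^ (n - 1)) b c a₂ a₃ (f 1) (f b)
    hN3 hb hS1 hSb hc' hE1 hf1 hfb h3 h4' (aux_L b hb n hn)
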